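/- Let K be a compact Hausdorff space. Then biort_1(C(K)) = s(K): the supremum of cardinalities of biorthogonal systems (f_i, μ_i)_{i∈I} ⊆ C(K) × M(K) in which every μ_i is 1-supported equals the spread of K. -/

import Mathlib

open Cardinal Set Topology

universe u

noncomputable section

/-- The spread of a topological space: the supremum of cardinalities of discrete subspaces. -/
def spread (Z : Type u) [TopologicalSpace Z] : Cardinal.{u} :=
  ⨆ D : {D : Set Z // DiscreteTopology D}, #D.1

/-- The density of a topological space: the least cardinality of a dense subset. -/
def densityCard (Z : Type u) [TopologicalSpace Z] : Cardinal.{u} :=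
  ⨅ D : {D : Set Z // Dense D}, #D.1

/-- The hereditary density: the supremum of the densities of all subspaces. -/
def hdens (Z : Type u) [TopologicalSpace Z] : Cardinal.{u} :=
  ⨆ S : Set Z, densityCard S

/-- The Lindelöf degree: the least cardinal κ such that every open cover
has a subcover of cardinality at most κ. -/
def lindelofDeg (Z : Type u) [TopologicalSpace Z] : Cardinal.{u} :=
  sInf {κ | ∀ (ι : Type u) (U : ι → Set Z), (∀ i, IsOpen (U i)) → (⋃ i, U i) = Set.univ →
    ∃ t : Set ι, #t ≤ κ ∧ (⋃ i ∈ t, U i) = Set.univ}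

/-- The hereditary Lindelöf degree: the supremum of the Lindelöf degrees of all subspaces. -/
def hLindelof (Z : Type u) [TopologicalSpace Z] : Cardinal.{u} :=
  ⨆ S : Set Z, lindelofDeg S

/-- A biorthogonal system `(x_i, f_i)_{i ∈ I} ⊆ X × X*`. -/
def IsBiorthSys {X : Type u} [NormedAddCommGroup X] [NormedSpace ℝ X] {I : Type u}
    (x : I → X) (f : I → (X →L[ℝ] ℝ)) : Prop :=
  (∀ i, f i (x i) = 1) ∧ ∀ i j, i ≠ j → f i (x j) = 0

/-- `biort X`: the supremum of cardinalities of biorthogonal systems in `X × X*`. -/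
def biort (X : Type u) [NormedAddCommGroup X] [NormedSpace ℝ X] : Cardinal.{u} :=
  sSup {c | ∃ (I : Type u) (x : I → X) (f : I → (X →L[ℝ] ℝ)), IsBiorthSys x f ∧ c = #I}

/-- An `n`-supported functional on `C(K, ℝ)`: a linear combination of `n` point
evaluations (Dirac measures). -/
def NSupported (K : Type u) [TopologicalSpace K] [CompactSpace K] (n : ℕ)
    (μ : C(K, ℝ) →L[ℝ] ℝ) : Prop :=
  ∃ (x : Fin n → K) (a : Fin n → ℝ), μ = ∑ i, a i • ContinuousMap.evalCLM ℝ (x i)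

/-- `biortN K n`: the supremum of cardinalities of biorthogonal systems in
`C(K) × M(K)` all of whose functionals are `n`-supported. -/
def biortN (K : Type u) [TopologicalSpace K] [CompactSpace K] (n : ℕ) : Cardinal.{u} :=
  sSup {c | ∃ (I : Type u) (f : I → C(K, ℝ)) (μ : I → (C(K, ℝ) →L[ℝ] ℝ)),
    IsBiorthSys f μ ∧ (∀ i, NSupported K n (μ i)) ∧ c = #I}

-- key lemma: any cardinal in the biortN 1 set is ≤ spread
theorem aux_le {K : Type u} [TopologicalSpace K] [CompactSpace K] [T2Space K]
    {I : Type u} (f : I → C(K, ℝ)) (μ : I → (C(K, ℝ) →L[ℝ] ℝ))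
    (hb : (∀ i, μ i (f i) = 1) ∧ ∀ i j, i ≠ j → μ i (f j) = 0)
    (h1 : ∀ i, ∃ (x : Fin 1 → K) (a : Fin 1 → ℝ),
      μ i = ∑ k, a k • ContinuousMap.evalCLM ℝ (x k)) :
    Cardinal.mk I ≤ ⨆ D : {D : Set K // DiscreteTopology D}, #D.1 := by
  choose x a hxa using h1
  have happ : ∀ i (g : C(K, ℝ)), μ i g = a i 0 * g (x i 0) := by
    intro i g
    rw [hxa i]
    simp [Fin.sum_univ_one, ContinuousMap.evalCLM]
  have hne : ∀ i, f i (x i 0) ≠ 0 := by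
    intro i h
    have := hb.1 i
    rw [happ] at this
    rw [h, mul_zero] at this
    exact one_ne_zero this.symm
  have hzero : ∀ i j, i ≠ j → f i (x j 0) = 0 := by
    intro i j hij
    have h2 := hb.2 j i (Ne.symm hij)
    rw [happ] at h2
    rcases mul_eq_zero.mp h2 with h | h
    · exfalso
      have := hb.1 j
      rw [happ, h, zero_mul] at this
      exact one_ne_zero this.symm
    · exact h
  have hinj : Function.Injective (fun i => x i 0) := by
    intro i j hij
    by_contra hne'
    have := hzero i j hne'
    rw [← show x i 0 = x j 0 from hij] at this
    exact hne i this
  set D : Set K := Set.range (fun i => x i 0) with hD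
  have hdisc : DiscreteTopology D := by
    rw [discreteTopology_iff_isOpen_singleton]
    rintro ⟨_, i, rfl⟩
    rw [isOpen_induced_iff]
    refine ⟨(f i) ⁻¹' {0}ᶜ, (isOpen_compl_singleton).preimage (f i).continuous, ?_⟩
    ext ⟨y, j, rfl⟩
    simp only [Set.mem_preimage, Set.mem_compl_iff, Set.mem_singleton_iff,
      Subtype.mk.injEq]
    constructor
    · intro h
      by_contra hji
      exact h (hzero i j (fun e => hji (Subtype.ext (congrArg (fun k => x k 0) e.symm))))
    · intro h
      have : j = i := hinj (congrArg Subtype.val h)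
      subst this
      exact hne j
  calc #I = #D := by rw [hD, Cardinal.mk_range_eq _ hinj]
    _ ≤ _ := le_ciSup (Cardinal.bddAbove_range _) (⟨D, hdisc⟩ : {D : Set K // DiscreteTopology D})

/-- For a compact Hausdorff space `K`, `biort₁(C(K)) = s(K)`. -/
theorem stmt6 (K : Type u) [TopologicalSpace K] [CompactSpace K] [T2Space K] :
    biortN K 1 = spread K := by
  rw [biortN, spread]
  have hone : ∀ (z : K), (ContinuousMap.evalCLM ℝ z : C(K,ℝ) →L[ℝ] ℝ) =
      ∑ k : Fin 1, (fun _ : Fin 1 => (1:ℝ)) k • ContinuousMap.evalCLM ℝ ((fun _ : Fin 1 => z) k) := by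
    intro z; simp
  apply le_antisymm
  · apply csSup_le
    · exact ⟨0, PEmpty, (fun i => i.elim), (fun i => i.elim),
        ⟨fun i => i.elim, fun i => i.elim⟩, fun i => i.elim, (Cardinal.mk_eq_zero PEmpty).symm⟩
    · rintro c ⟨I, f, μ, hb, hsupp, rfl⟩
      exact aux_le f μ hb hsupp
  · haveI : Nonempty {D : Set K // DiscreteTopology D} := ⟨⟨∅, by infer_instance⟩⟩
    apply ciSup_le
    rintro ⟨D, hdisc⟩
    -- for each d ∈ D find open U with U ∩ D = {d}
    have hiso : ∀ d : D, ∃ U : Set K, IsOpen U ∧ (d : K) ∈ U ∧ ∀ d' : D, (d' : K) ∈ U → d' = d := by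
      intro d
      have : IsOpen ({d} : Set D) := isOpen_discrete _
      rw [isOpen_induced_iff] at this
      obtain ⟨U, hU, hUe⟩ := this
      refine ⟨U, hU, ?_, ?_⟩
      · have : d ∈ (Subtype.val ⁻¹' U) := hUe ▸ rfl
        exact this
      · intro d' hd'
        have : d' ∈ (Subtype.val ⁻¹' U) := hd'
        rw [hUe] at this
        exact this
    choose U hUopen hUmem hUsingle using hiso
    -- Urysohn functions
    have hfun : ∀ d : D, ∃ g : C(K, ℝ), g (d : K) = 1 ∧ ∀ d' : D, d' ≠ d → g (d' : K) = 0 := by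
      intro d
      obtain ⟨g, hg0, hg1, -⟩ := exists_continuous_zero_one_of_isClosed
        (isClosed_compl_iff.mpr (hUopen d)) (isClosed_singleton (x := (d : K)))
        (by simp [Set.disjoint_singleton_right, hUmem d])
      refine ⟨g, hg1 rfl, ?_⟩
      intro d' hd'
      apply hg0
      intro hmem
      exact hd' (hUsingle d d' (by simpa using hmem))
    choose g hg1 hg0 using hfun
    apply le_csSup
    · refine ⟨⨆ D : {D : Set K // DiscreteTopology D}, #D.1, ?_⟩
      rintro c ⟨I, f, μ, hb, hsupp, rfl⟩
      exact aux_le f μ hb hsupp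
    · refine ⟨D, g, fun d => ContinuousMap.evalCLM ℝ (d : K), ⟨?_, ?_⟩, ?_, rfl⟩
      · intro d; exact hg1 d
      · intro d d' hdd'
        exact hg0 d' d hdd'
      · intro d
        exact ⟨fun _ => (d : K), fun _ => 1, hone d⟩

end
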